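/- Let s, s' > 3/2. Then there exists C > 0 such that for every nonzero z in the closed upper half-plane with |z| ≥ 1 and every ψ ∈ L^{2,s}(ℝ): (i) ‖R₀(z)ψ‖_{−s'} ≤ C |z|^{−1/2} ‖ψ‖_s, and (ii) the integral operator R₀'(z) with kernel K₁(z; x, y) := exp(i z^{1/2}|x−y|) · ( (1/(4i)) z^{−3/2} − (|x−y|/4) z^{−1} ) (the z-derivative of the resolvent kernel) satisfies ‖R₀'(z)ψ‖_{−s'} ≤ C |z|^{−1} ‖ψ‖_s. -/

import Mathlib

open MeasureTheory Filter

/-- The weighted norm `‖ψ‖_s = (∫ (1+x²)^s |ψ(x)|² dx)^{1/2}`. -/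
noncomputable def wnorm (s : ℝ) (ψ : ℝ → ℂ) : ℝ :=
  (∫ x : ℝ, (1 + x ^ 2) ^ s * ‖ψ x‖ ^ 2) ^ ((1 : ℝ) / 2)

/-- Membership in the weighted space `L^{2,s}(ℝ)`. -/
def MemL2s (s : ℝ) (ψ : ℝ → ℂ) : Prop :=
  Measurable ψ ∧ Integrable (fun x : ℝ => (1 + x ^ 2) ^ s * ‖ψ x‖ ^ 2)

/-- The free resolvent `(R₀(z)ψ)(x) = −(1/(2i z^{1/2})) ∫ exp(i z^{1/2}|x−y|) ψ(y) dy`,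
with the principal square root `z^{1/2}`. -/
noncomputable def R0 (z : ℂ) (ψ : ℝ → ℂ) (x : ℝ) : ℂ :=
  -(1 / (2 * Complex.I * z ^ ((1 : ℂ) / 2))) *
    ∫ y : ℝ, Complex.exp (Complex.I * z ^ ((1 : ℂ) / 2) * ((|x - y| : ℝ) : ℂ)) * ψ y

/-- The `z`-derivative of the resolvent: the integral operator with kernel
`K₁(z; x, y) = exp(i z^{1/2}|x−y|) ((1/(4i)) z^{−3/2} − (|x−y|/4) z^{−1})`. -/
noncomputable def R0' (z : ℂ) (ψ : ℝ → ℂ) (x : ℝ) : ℂ :=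
  ∫ y : ℝ, Complex.exp (Complex.I * z ^ ((1 : ℂ) / 2) * ((|x - y| : ℝ) : ℂ)) *
      (1 / (4 * Complex.I) * z ^ (-(3 : ℂ) / 2) -
        ((|x - y| : ℝ) : ℂ) / 4 * z⁻¹) * ψ y

/- ### Auxiliary lemmas -/

private lemma onep (x : ℝ) : (0:ℝ) < 1 + x ^ 2 := by positivity

private lemma integrable_wt {t : ℝ} (ht : t < -(1/2)) :
    Integrable (fun x : ℝ => (1 + x ^ 2) ^ t) := by
  have h := integrable_rpow_neg_one_add_norm_sq (E := ℝ) (μ := (volume : Measure ℝ))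
    (r := -(2*t)) (by simp; linarith)
  have heq : (fun x : ℝ => (1 + x ^ 2) ^ t)
      = fun x : ℝ => ((1:ℝ) + ‖x‖ ^ 2) ^ (-(-(2*t))/2) := by
    funext x; rw [Real.norm_eq_abs, sq_abs]; congr 1; ring
  rw [heq]; exact h

private lemma cs_bound {s : ℝ} (t : ℝ) (h2 : 2*t - s < -(1/2)) {ψ : ℝ → ℂ} (hψ : MemL2s s ψ) :
    Integrable (fun y : ℝ => (1 + y ^ 2) ^ t * ‖ψ y‖) ∧
    ∫ y : ℝ, (1 + y ^ 2) ^ t * ‖ψ y‖ ≤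
      (∫ y : ℝ, (1 + y ^ 2) ^ (2*t - s)) ^ ((1:ℝ)/2) * wnorm s ψ := by
  set f : ℝ → ℝ := fun y => (1 + y ^ 2) ^ (t - s/2) with hf
  set g : ℝ → ℝ := fun y => (1 + y ^ 2) ^ (s/2) * ‖ψ y‖ with hg
  have hfg : ∀ y, f y * g y = (1 + y ^ 2) ^ t * ‖ψ y‖ := by
    intro y
    rw [hf, hg]
    simp only []
    rw [← mul_assoc, ← Real.rpow_add (onep y)]
    congr 2
    ring
  have hf2 : ∀ y, f y ^ 2 = (1 + y ^ 2) ^ (2*t - s) := by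
    intro y
    rw [hf, ← Real.rpow_natCast ((1 + y ^ 2) ^ (t - s/2)) 2, ← Real.rpow_mul (onep y).le]
    congr 1
    push_cast; ring
  have hg2 : ∀ y, g y ^ 2 = (1 + y ^ 2) ^ s * ‖ψ y‖ ^ 2 := by
    intro y
    rw [hg]
    simp only []
    rw [mul_pow, ← Real.rpow_natCast ((1 + y ^ 2) ^ (s/2)) 2, ← Real.rpow_mul (onep y).le]
    congr 2
    push_cast; ring
  have hfm : Measurable f := by fun_prop
  have hgm : Measurable g := Measurable.mul (by fun_prop) hψ.1.norm
  have hfL : MemLp f 2 volume := by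
    rw [memLp_two_iff_integrable_sq hfm.aestronglyMeasurable]
    exact (integrable_wt h2).congr (Filter.Eventually.of_forall fun y => (hf2 y).symm)
  have hgL : MemLp g 2 volume := by
    rw [memLp_two_iff_integrable_sq hgm.aestronglyMeasurable]
    exact hψ.2.congr (Filter.Eventually.of_forall fun y => (hg2 y).symm)
  constructor
  · have hbd : Integrable (fun y : ℝ => ((1 + y ^ 2) ^ (2*t - s) + (1 + y ^ 2) ^ s * ‖ψ y‖ ^ 2)/2) :=
      ((integrable_wt h2).add hψ.2).div_const 2
    refine hbd.mono' ?_ (Filter.Eventually.of_forall fun y => ?_)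
    · exact ((by fun_prop : Measurable fun y : ℝ => (1 + y ^ 2) ^ t).mul hψ.1.norm).aestronglyMeasurable
    · have h1 : (0:ℝ) ≤ f y := Real.rpow_nonneg (onep y).le _
      have h2' : (0:ℝ) ≤ g y := mul_nonneg (Real.rpow_nonneg (onep y).le _) (norm_nonneg _)
      have key : f y * g y ≤ (f y ^ 2 + g y ^ 2)/2 := by nlinarith [sq_nonneg (f y - g y)]
      rw [Real.norm_of_nonneg (by positivity)]
      rw [← hfg y, ← hf2 y, ← hg2 y]
      exact key
  · have hCS := integral_mul_le_Lp_mul_Lq_of_nonneg (μ := volume)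
      (by constructor <;> norm_num : Real.HolderConjugate 2 2)
      (Filter.Eventually.of_forall fun y => Real.rpow_nonneg (onep y).le _ :
        (0:ℝ → ℝ) ≤ᵐ[volume] f)
      (Filter.Eventually.of_forall fun y => mul_nonneg (Real.rpow_nonneg (onep y).le _)
        (norm_nonneg _) : (0:ℝ → ℝ) ≤ᵐ[volume] g)
      (by rw [show ENNReal.ofReal 2 = 2 by norm_num]; exact hfL)
      (by rw [show ENNReal.ofReal 2 = 2 by norm_num]; exact hgL)
    have e1 : ∫ y : ℝ, f y ^ (2:ℝ) = ∫ y : ℝ, (1 + y ^ 2) ^ (2*t - s) :=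
      integral_congr_ae (Filter.Eventually.of_forall fun y => by
        show f y ^ (2:ℝ) = _
        rw [show f y ^ (2:ℝ) = f y ^ (2:ℕ) from by rw [← Real.rpow_natCast]; norm_num, hf2 y])
    have e2 : ∫ y : ℝ, g y ^ (2:ℝ) = ∫ x : ℝ, (1 + x ^ 2) ^ s * ‖ψ x‖ ^ 2 :=
      integral_congr_ae (Filter.Eventually.of_forall fun y => by
        show g y ^ (2:ℝ) = _
        rw [show g y ^ (2:ℝ) = g y ^ (2:ℕ) from by rw [← Real.rpow_natCast]; norm_num, hg2 y])
    calc ∫ y : ℝ, (1 + y ^ 2) ^ t * ‖ψ y‖ = ∫ y : ℝ, f y * g y :=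
          integral_congr_ae (Filter.Eventually.of_forall fun y => (hfg y).symm)
      _ ≤ (∫ y : ℝ, f y ^ (2:ℝ)) ^ ((1:ℝ)/2) * (∫ y : ℝ, g y ^ (2:ℝ)) ^ ((1:ℝ)/2) := hCS
      _ = (∫ y : ℝ, (1 + y ^ 2) ^ (2*t - s)) ^ ((1:ℝ)/2) * wnorm s ψ := by
          rw [e1, e2, wnorm]

private lemma exp_abs_le (z : ℂ) (him : 0 ≤ z.im) (r : ℝ) (hr : 0 ≤ r) :
    ‖Complex.exp (Complex.I * z ^ ((1:ℂ)/2) * (r:ℂ))‖ ≤ 1 := by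
  rw [Complex.norm_exp]
  have h1 : 0 ≤ (z ^ ((1:ℂ)/2)).im := by
    rw [show ((1:ℂ)/2) = (2⁻¹ : ℂ) by norm_num, Complex.cpow_inv_two_im_eq_sqrt him]
    exact Real.sqrt_nonneg _
  have h2 : (Complex.I * z ^ ((1:ℂ)/2) * (r:ℂ)).re = -(z ^ ((1:ℂ)/2)).im * r := by
    simp [Complex.mul_re, Complex.mul_im]
  rw [h2, Real.exp_le_one_iff]
  have := mul_nonneg h1 hr
  linarith

private lemma wnorm_bound {s' t M : ℝ} (hM : 0 ≤ M) {F : ℝ → ℂ}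
    (hF : ∀ x, ‖F x‖ ≤ M * (1 + x^2) ^ t)
    (hint : Integrable (fun x : ℝ => (1 + x^2) ^ (2*t - s'))) :
    (∫ x : ℝ, (1 + x ^ 2) ^ (-s') * ‖F x‖ ^ 2) ^ ((1:ℝ)/2)
      ≤ M * (∫ x : ℝ, (1 + x^2) ^ (2*t - s')) ^ ((1:ℝ)/2) := by
  have key : ∫ x : ℝ, (1 + x ^ 2) ^ (-s') * ‖F x‖ ^ 2
      ≤ ∫ x : ℝ, M^2 * (1 + x^2) ^ (2*t - s') := by
    apply integral_mono_of_nonneg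
    · exact Filter.Eventually.of_forall fun x => by positivity
    · exact hint.const_mul _
    · refine Filter.Eventually.of_forall fun x => ?_
      have h1 : ‖F x‖ ^ 2 ≤ (M * (1 + x^2) ^ t) ^ 2 :=
        pow_le_pow_left₀ (norm_nonneg _) (hF x) 2
      calc (1 + x ^ 2) ^ (-s') * ‖F x‖ ^ 2
          ≤ (1 + x ^ 2) ^ (-s') * (M * (1 + x^2) ^ t) ^ 2 :=
            mul_le_mul_of_nonneg_left h1 (Real.rpow_nonneg (onep x).le _)
        _ = M^2 * (1 + x^2) ^ (2*t - s') := by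
            rw [mul_pow, ← Real.rpow_natCast ((1 + x^2) ^ t) 2, ← Real.rpow_mul (onep x).le,
              ← mul_assoc, mul_comm ((1 + x ^ 2) ^ (-s')) (M^2), mul_assoc,
              ← Real.rpow_add (onep x)]
            congr 2
            push_cast; ring
  have hnn : 0 ≤ ∫ x : ℝ, (1 + x^2) ^ (2*t - s') :=
    integral_nonneg fun x => Real.rpow_nonneg (onep x).le _
  calc (∫ x : ℝ, (1 + x ^ 2) ^ (-s') * ‖F x‖ ^ 2) ^ ((1:ℝ)/2)
      ≤ (∫ x : ℝ, M^2 * (1 + x^2) ^ (2*t - s')) ^ ((1:ℝ)/2) := by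
        apply Real.rpow_le_rpow (integral_nonneg fun x => by positivity) key (by norm_num)
    _ = M * (∫ x : ℝ, (1 + x^2) ^ (2*t - s')) ^ ((1:ℝ)/2) := by
        rw [integral_const_mul _ _, Real.mul_rpow (sq_nonneg M) hnn]
        congr 1
        rw [← Real.rpow_natCast M 2, ← Real.rpow_mul hM]
        norm_num

set_option maxHeartbeats 1000000 in
/-- Large-energy bounds for the free resolvent and its derivative: for `s, s' > 3/2`
there is `C > 0` such that for every nonzero `z` in the closed upper half-plane
with `|z| ≥ 1`, `‖R₀(z)ψ‖_{−s'} ≤ C|z|^{−1/2}‖ψ‖_s` and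
`‖R₀'(z)ψ‖_{−s'} ≤ C|z|^{−1}‖ψ‖_s`. -/
theorem stmt6 (s s' : ℝ) (hs : s > 3 / 2) (hs' : s' > 3 / 2) :
    ∃ C > (0 : ℝ), ∀ z : ℂ, z ≠ 0 → 0 ≤ z.im → 1 ≤ ‖z‖ →
      ∀ ψ : ℝ → ℂ, MemL2s s ψ →
        wnorm (-s') (R0 z ψ) ≤ C * ‖z‖ ^ (-(1 : ℝ) / 2) * wnorm s ψ ∧
        wnorm (-s') (R0' z ψ) ≤ C * ‖z‖⁻¹ * wnorm s ψ := by
  set J0s : ℝ := (∫ y : ℝ, (1 + y ^ 2) ^ (2*(0:ℝ) - s)) ^ ((1:ℝ)/2) with hJ0s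
  set J1s : ℝ := (∫ y : ℝ, (1 + y ^ 2) ^ (2*((1:ℝ)/2) - s)) ^ ((1:ℝ)/2) with hJ1s
  set J0s' : ℝ := (∫ x : ℝ, (1 + x ^ 2) ^ (2*(0:ℝ) - s')) ^ ((1:ℝ)/2) with hJ0s'
  set J1s' : ℝ := (∫ x : ℝ, (1 + x ^ 2) ^ (2*((1:ℝ)/2) - s')) ^ ((1:ℝ)/2) with hJ1s'
  have hJ0s_nn : 0 ≤ J0s := Real.rpow_nonneg (integral_nonneg fun y => Real.rpow_nonneg (onep y).le _) _
  have hJ1s_nn : 0 ≤ J1s := Real.rpow_nonneg (integral_nonneg fun y => Real.rpow_nonneg (onep y).le _) _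
  have hJ0s'_nn : 0 ≤ J0s' := Real.rpow_nonneg (integral_nonneg fun y => Real.rpow_nonneg (onep y).le _) _
  have hJ1s'_nn : 0 ≤ J1s' := Real.rpow_nonneg (integral_nonneg fun y => Real.rpow_nonneg (onep y).le _) _
  clear_value J0s J1s J0s' J1s'
  have h0s : 2*(0:ℝ) - s < -(1/2) := by linarith
  have h1s : 2*((1:ℝ)/2) - s < -(1/2) := by linarith
  have h0s' : 2*(0:ℝ) - s' < -(1/2) := by linarith
  have h1s' : 2*((1:ℝ)/2) - s' < -(1/2) := by linarith
  refine ⟨(1/2)*J0s*J0s' + (1/2)*J1s*J1s' + 1, by positivity, fun z hz him habs ψ hψ => ?_⟩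
  set C : ℝ := (1/2)*J0s*J0s' + (1/2)*J1s*J1s' + 1 with hC
  have hW : 0 ≤ wnorm s ψ :=
    Real.rpow_nonneg (integral_nonneg fun x => by positivity) _
  have habs0 : (0:ℝ) < ‖z‖ := by linarith
  have hinvnn : (0:ℝ) ≤ ‖z‖⁻¹ := inv_nonneg.mpr (norm_nonneg z)
  have hrpnn : (0:ℝ) ≤ ‖z‖ ^ (-(1:ℝ)/2) := Real.rpow_nonneg (norm_nonneg z) _
  have hcs0 := cs_bound 0 h0s hψ
  have hcs1 := cs_bound ((1:ℝ)/2) h1s hψ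
  rw [← hJ0s] at hcs0
  rw [← hJ1s] at hcs1
  have habsw : ‖z ^ ((1:ℂ)/2)‖ = ‖z‖ ^ ((1:ℝ)/2) := by
    rw [Complex.norm_cpow_of_ne_zero hz]; norm_num
  constructor
  · -- part (i)
    have hpt : ∀ x : ℝ, ‖R0 z ψ x‖ ≤
        ((1/2) * ‖z‖ ^ (-(1:ℝ)/2) * (J0s * wnorm s ψ)) * (1 + x^2) ^ (0:ℝ) := by
      intro x
      rw [Real.rpow_zero, mul_one, R0, norm_mul]
      have hc : ‖-(1 / (2 * Complex.I * z ^ ((1:ℂ)/2)))‖ =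
          (1/2) * ‖z‖ ^ (-(1:ℝ)/2) := by
        rw [norm_neg, norm_div, norm_mul, norm_mul, Complex.norm_I, habsw]
        norm_num
        rw [Real.rpow_neg (norm_nonneg z)]
        ring_nf
      rw [hc]
      have hI : ‖∫ y : ℝ, Complex.exp (Complex.I * z ^ ((1:ℂ)/2) * ((|x - y| : ℝ) : ℂ)) * ψ y‖
          ≤ J0s * wnorm s ψ := by
        refine le_trans (norm_integral_le_integral_norm _) (le_trans ?_ hcs0.2)
        apply integral_mono_of_nonneg (Filter.Eventually.of_forall fun y => norm_nonneg _)
          hcs0.1 (Filter.Eventually.of_forall fun y => ?_)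
        show ‖Complex.exp (Complex.I * z ^ ((1:ℂ)/2) * ((|x - y| : ℝ) : ℂ)) * ψ y‖
          ≤ (1 + y ^ 2) ^ (0:ℝ) * ‖ψ y‖
        rw [norm_mul, Real.rpow_zero]
        exact mul_le_mul_of_nonneg_right (exp_abs_le z him _ (abs_nonneg _)) (norm_nonneg _)
      exact mul_le_mul_of_nonneg_left hI (mul_nonneg (by norm_num) hrpnn)
    have hMnn : (0:ℝ) ≤ (1/2) * ‖z‖ ^ (-(1:ℝ)/2) * (J0s * wnorm s ψ) :=
      mul_nonneg (mul_nonneg (by norm_num) hrpnn) (mul_nonneg hJ0s_nn hW)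
    have hbd := wnorm_bound (t := (0:ℝ)) (s' := s') hMnn hpt (integrable_wt h0s')
    rw [wnorm]
    refine le_trans hbd ?_
    rw [← hJ0s']
    have hstep : (1/2) * ‖z‖ ^ (-(1:ℝ)/2) * (J0s * wnorm s ψ) * J0s'
        = ((1/2)*J0s*J0s') * (‖z‖ ^ (-(1:ℝ)/2) * wnorm s ψ) := by ring
    rw [hstep]
    have hCle : (1/2)*J0s*J0s' ≤ C := by
      have := mul_nonneg (mul_nonneg (by norm_num : (0:ℝ) ≤ 1/2) hJ1s_nn) hJ1s'_nn; rw [hC]; linarith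
    calc ((1/2)*J0s*J0s') * (‖z‖ ^ (-(1:ℝ)/2) * wnorm s ψ)
        ≤ C * (‖z‖ ^ (-(1:ℝ)/2) * wnorm s ψ) :=
          mul_le_mul_of_nonneg_right hCle (mul_nonneg hrpnn hW)
      _ = C * ‖z‖ ^ (-(1:ℝ)/2) * wnorm s ψ := by ring
  · -- part (ii)
    have hz32 : ‖z ^ (-(3:ℂ)/2)‖ ≤ ‖z‖⁻¹ := by
      rw [Complex.norm_cpow_of_ne_zero hz]
      norm_num
      calc ‖z‖ ^ (-(3/2):ℝ) ≤ ‖z‖ ^ (-1:ℝ) :=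
            Real.rpow_le_rpow_of_exponent_le habs (by norm_num)
        _ = ‖z‖⁻¹ := Real.rpow_neg_one _
    have hpt : ∀ x : ℝ, ‖R0' z ψ x‖ ≤
        ((1/2) * ‖z‖⁻¹ * (J1s * wnorm s ψ)) * (1 + x^2) ^ ((1:ℝ)/2) := by
      intro x
      rw [R0']
      set c : ℝ := (1/2) * ‖z‖⁻¹ * (1 + x^2) ^ ((1:ℝ)/2) with hc
      have hcnn : 0 ≤ c :=
        mul_nonneg (mul_nonneg (by norm_num) hinvnn) (Real.rpow_nonneg (onep x).le _)
      have hker : ∀ y : ℝ,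
          ‖Complex.exp (Complex.I * z ^ ((1:ℂ)/2) * ((|x - y| : ℝ) : ℂ)) *
            (1 / (4 * Complex.I) * z ^ (-(3:ℂ)/2) - ((|x - y| : ℝ) : ℂ) / 4 * z⁻¹) * ψ y‖
          ≤ c * ((1 + y^2) ^ ((1:ℝ)/2) * ‖ψ y‖) := by
        intro y
        set r : ℝ := |x - y| with hr
        have hrnn : 0 ≤ r := abs_nonneg _
        set P : ℝ := (1 + x^2) ^ ((1:ℝ)/2) * (1 + y^2) ^ ((1:ℝ)/2) with hP
        have hPsqrt : P = Real.sqrt ((1 + x^2) * (1 + y^2)) := by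
          rw [hP, ← Real.sqrt_eq_rpow, ← Real.sqrt_eq_rpow, ← Real.sqrt_mul (onep x).le]
        have hP1 : 1 ≤ P := by
          rw [hPsqrt]
          apply Real.one_le_sqrt.mpr
          nlinarith [sq_nonneg x, sq_nonneg y]
        have hPr : r ≤ P := by
          rw [hPsqrt]
          apply Real.le_sqrt_of_sq_le
          rw [hr, sq_abs]
          nlinarith [sq_nonneg (1 + x*y)]
        have hA : ‖(1 : ℂ) / (4 * Complex.I) * z ^ (-(3:ℂ)/2)‖ ≤ (1/4) * ‖z‖⁻¹ := by
          rw [norm_mul, show ‖(1 : ℂ) / (4 * Complex.I)‖ = 1/4 from by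
            simp]
          exact mul_le_mul_of_nonneg_left hz32 (by norm_num)
        have hB : ‖((r : ℝ) : ℂ) / 4 * z⁻¹‖ = (r/4) * ‖z‖⁻¹ := by
          rw [norm_mul, norm_div, Complex.norm_real, Real.norm_of_nonneg hrnn, norm_inv,
            Complex.norm_ofNat]
        have hAB : ‖(1 : ℂ) / (4 * Complex.I) * z ^ (-(3:ℂ)/2) - ((r : ℝ) : ℂ) / 4 * z⁻¹‖
            ≤ (P/2) * ‖z‖⁻¹ := by
          calc ‖(1 : ℂ) / (4 * Complex.I) * z ^ (-(3:ℂ)/2) - ((r : ℝ) : ℂ) / 4 * z⁻¹‖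
              ≤ ‖(1 : ℂ) / (4 * Complex.I) * z ^ (-(3:ℂ)/2)‖ + ‖((r : ℝ) : ℂ) / 4 * z⁻¹‖ :=
                norm_sub_le _ _
            _ ≤ (1/4) * ‖z‖⁻¹ + (r/4) * ‖z‖⁻¹ := by
                rw [hB]
                exact add_le_add hA le_rfl
            _ ≤ (P/2) * ‖z‖⁻¹ := by nlinarith
        have hPnn : 0 ≤ P := le_trans zero_le_one hP1
        calc ‖Complex.exp (Complex.I * z ^ ((1:ℂ)/2) * ((|x - y| : ℝ) : ℂ)) *
              (1 / (4 * Complex.I) * z ^ (-(3:ℂ)/2) - ((|x - y| : ℝ) : ℂ) / 4 * z⁻¹) * ψ y‖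
            = ‖Complex.exp (Complex.I * z ^ ((1:ℂ)/2) * ((|x - y| : ℝ) : ℂ))‖ *
              ‖(1 / (4 * Complex.I) * z ^ (-(3:ℂ)/2) - ((|x - y| : ℝ) : ℂ) / 4 * z⁻¹)‖ *
              ‖ψ y‖ := by rw [norm_mul, norm_mul]
          _ ≤ 1 * ((P/2) * ‖z‖⁻¹) * ‖ψ y‖ := by
              apply mul_le_mul_of_nonneg_right _ (norm_nonneg _)
              exact mul_le_mul (exp_abs_le z him _ (abs_nonneg _)) hAB (norm_nonneg _)
                zero_le_one
          _ = c * ((1 + y^2) ^ ((1:ℝ)/2) * ‖ψ y‖) := by rw [hc, hP]; ring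
      refine le_trans (norm_integral_le_integral_norm _) ?_
      have hmono : (∫ y : ℝ, ‖Complex.exp (Complex.I * z ^ ((1:ℂ)/2) * ((|x - y| : ℝ) : ℂ)) *
            (1 / (4 * Complex.I) * z ^ (-(3:ℂ)/2) - ((|x - y| : ℝ) : ℂ) / 4 * z⁻¹) * ψ y‖)
          ≤ ∫ y : ℝ, c * ((1 + y^2) ^ ((1:ℝ)/2) * ‖ψ y‖) :=
        integral_mono_of_nonneg (Filter.Eventually.of_forall fun y => norm_nonneg _)
          (hcs1.1.const_mul c) (Filter.Eventually.of_forall hker)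
      refine le_trans hmono ?_
      rw [integral_const_mul]
      calc c * ∫ y : ℝ, (1 + y^2) ^ ((1:ℝ)/2) * ‖ψ y‖
          ≤ c * (J1s * wnorm s ψ) := mul_le_mul_of_nonneg_left hcs1.2 hcnn
        _ = ((1/2) * ‖z‖⁻¹ * (J1s * wnorm s ψ)) * (1 + x^2) ^ ((1:ℝ)/2) := by
            rw [hc]; ring
    have hMnn : (0:ℝ) ≤ (1/2) * ‖z‖⁻¹ * (J1s * wnorm s ψ) :=
      mul_nonneg (mul_nonneg (by norm_num) hinvnn) (mul_nonneg hJ1s_nn hW)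
    have hbd := wnorm_bound (t := ((1:ℝ)/2)) (s' := s') hMnn hpt (integrable_wt h1s')
    rw [wnorm]
    refine le_trans hbd ?_
    rw [← hJ1s']
    have hstep : (1/2) * ‖z‖⁻¹ * (J1s * wnorm s ψ) * J1s'
        = ((1/2)*J1s*J1s') * (‖z‖⁻¹ * wnorm s ψ) := by ring
    rw [hstep]
    have hCle : (1/2)*J1s*J1s' ≤ C := by
      have := mul_nonneg (mul_nonneg (by norm_num : (0:ℝ) ≤ 1/2) hJ0s_nn) hJ0s'_nn; rw [hC]; linarith
    calc ((1/2)*J1s*J1s') * (‖z‖⁻¹ * wnorm s ψ)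
        ≤ C * (‖z‖⁻¹ * wnorm s ψ) :=
          mul_le_mul_of_nonneg_right hCle (mul_nonneg hinvnn hW)
      _ = C * ‖z‖⁻¹ * wnorm s ψ := by ring
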